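/- Let S be a metric space, let (μ_n) and μ be Borel probability measures on S with μ_n → μ weakly, let (S',ρ) be a separable metric space, and let φ : S → S' be a Borel measurable map whose set of discontinuity points is a μ-null set. Then the pushforward measures μ_n ∘ φ⁻¹ converge weakly to μ ∘ φ⁻¹ on S'. -/

import Mathlib

open MeasureTheory Filter Topology

/-- Continuous mapping theorem: if `μ_n → μ` weakly on a metric space `S` and
`φ : S → S'` is Borel measurable with a `μ`-null set of discontinuity points, then
`μ_n ∘ φ⁻¹ → μ ∘ φ⁻¹` weakly on the separable metric space `S'`. -/
theorem stmt15 {S : Type*} [MetricSpace S] [MeasurableSpace S] [BorelSpace S]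
    {S' : Type*} [MetricSpace S'] [TopologicalSpace.SeparableSpace S']
    [MeasurableSpace S'] [BorelSpace S']
    (μn : ℕ → Measure S) (μ : Measure S)
    [∀ n, IsProbabilityMeasure (μn n)] [IsProbabilityMeasure μ]
    (hweak : ∀ h : BoundedContinuousFunction S ℝ,
      Tendsto (fun n => ∫ x, h x ∂(μn n)) atTop (𝓝 (∫ x, h x ∂μ)))
    (φ : S → S') (hφm : Measurable φ)
    (hdisc : μ {x | ¬ ContinuousAt φ x} = 0) :
    ∀ h : BoundedContinuousFunction S' ℝ,
      Tendsto (fun n => ∫ y, h y ∂((μn n).map φ)) atTop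
        (𝓝 (∫ y, h y ∂(μ.map φ))) := by
  set D := {x | ¬ ContinuousAt φ x} with hD
  let ν : ProbabilityMeasure S := ⟨μ, inferInstance⟩
  let νn : ℕ → ProbabilityMeasure S := fun n => ⟨μn n, inferInstance⟩
  have hν : Tendsto νn atTop (𝓝 ν) :=
    ProbabilityMeasure.tendsto_iff_forall_integral_tendsto.mpr hweak
  let κ : ProbabilityMeasure S' := ν.map hφm.aemeasurable
  let κn : ℕ → ProbabilityMeasure S' := fun n => (νn n).map hφm.aemeasurable
  -- limsup condition for closed sets in S'
  have hclosed : ∀ F : Set S', IsClosed F →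
      atTop.limsup (fun i => (κn i : Measure S') F) ≤ (κ : Measure S') F := by
    intro F F_closed
    have hmapn : ∀ i, (κn i : Measure S') F = (μn i) (φ ⁻¹' F) := fun i =>
      Measure.map_apply hφm F_closed.measurableSet
    have hmapκ : (κ : Measure S') F = μ (φ ⁻¹' F) :=
      Measure.map_apply hφm F_closed.measurableSet
    have hsub : closure (φ ⁻¹' F) ⊆ φ ⁻¹' F ∪ D := by
      intro x hx
      by_cases hc : ContinuousAt φ x
      · left
        have h1 : φ x ∈ closure (φ '' (φ ⁻¹' F)) :=
          hc.continuousWithinAt.mem_closure_image hx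
        have h2 : closure (φ '' (φ ⁻¹' F)) ⊆ F := by
          rw [F_closed.closure_subset_iff]
          exact Set.image_preimage_subset φ F
        exact h2 h1
      · right; exact hc
    calc atTop.limsup (fun i => (κn i : Measure S') F)
        ≤ atTop.limsup (fun i => (μn i) (closure (φ ⁻¹' F))) := by
          apply limsup_le_limsup (Eventually.of_forall fun i => ?_)
          rw [hmapn i]
          exact measure_mono subset_closure
      _ ≤ μ (closure (φ ⁻¹' F)) :=
          ProbabilityMeasure.limsup_measure_closed_le_of_tendsto hν isClosed_closure
      _ ≤ μ (φ ⁻¹' F ∪ D) := measure_mono hsub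
      _ ≤ μ (φ ⁻¹' F) + μ D := measure_union_le _ _
      _ = (κ : Measure S') F := by rw [hdisc, add_zero, hmapκ]
  -- liminf condition for open sets (ℝ≥0∞ version)
  have hopen : ∀ G : Set S', IsOpen G →
      (κ : Measure S') G ≤ atTop.liminf (fun i => (κn i : Measure S') G) := fun G G_open =>
    le_measure_liminf_of_limsup_measure_compl_le G_open.measurableSet
      (hclosed Gᶜ (isClosed_compl_iff.mpr G_open))
  -- transfer to ℝ≥0 and conclude convergence of mapped probability measures
  have hκ : Tendsto κn atTop (𝓝 κ) := by
    apply tendsto_of_forall_isOpen_le_liminf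
    intro G G_open
    have aux : (ENNReal.ofNNReal (atTop.liminf (fun i ↦ κn i G))) =
        atTop.liminf (ENNReal.ofNNReal ∘ fun i ↦ κn i G) := by
      refine Monotone.map_liminf_of_continuousAt (F := atTop) ENNReal.coe_mono (κn · G)
        ENNReal.continuous_coe.continuousAt ?_ ⟨0, by simp⟩
      exact IsBoundedUnder.isCoboundedUnder_ge ⟨1, by simp⟩
    rw [← ENNReal.coe_le_coe, aux]
    simpa only [Function.comp_def, ProbabilityMeasure.ennreal_coeFn_eq_coeFn_toMeasure]
      using hopen G G_open
  intro h
  have := ProbabilityMeasure.tendsto_iff_forall_integral_tendsto.mp hκ h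
  simp only [κn, κ, ProbabilityMeasure.toMeasure_map] at this
  exact this
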